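/- Let t = ⌊n/3⌋. Every Boolean nearest neighbor representation of the threshold function TH_n^t contains at least C(n,t)/C(2t,t) positive prototypes; in particular BNN(TH_n^{⌊n/3⌋}) ≥ C(n,⌊n/3⌋)/C(2⌊n/3⌋,⌊n/3⌋) = 2^{Ω(n)}. -/

import Mathlib

open Finset

noncomputable section

noncomputable instance {n : ℕ} : DecidableEq (EuclideanSpace ℝ (Fin n)) :=
  fun _ _ => Classical.propDecidable _

/-- The embedding of a Boolean value into `ℝ`. -/
def boolToR (b : Bool) : ℝ := if b then 1 else 0

/-- The embedding of a Boolean vector into Euclidean space `ℝ^n`. -/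
def toPoint {n : ℕ} (a : Fin n → Bool) : EuclideanSpace ℝ (Fin n) :=
  WithLp.toLp 2 (fun i => boolToR (a i))

/-- `(P, N)` is a nearest neighbor representation of the Boolean function `f`:
`P` and `N` are disjoint finite sets of points of `ℝ^n` such that for every Boolean
vector `a`, if `f a = 1` then some `b ∈ P` is strictly closer to `a` than every `c ∈ N`,
and if `f a = 0` then some `b ∈ N` is strictly closer to `a` than every `c ∈ P`. -/
def IsNNRep {n : ℕ} (f : (Fin n → Bool) → Bool)
    (P N : Finset (EuclideanSpace ℝ (Fin n))) : Prop :=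
  Disjoint P N ∧
  ∀ a : Fin n → Bool,
    (f a = true → ∃ b ∈ P, ∀ c ∈ N, dist (toPoint a) b < dist (toPoint a) c) ∧
    (f a = false → ∃ b ∈ N, ∀ c ∈ P, dist (toPoint a) b < dist (toPoint a) c)

/-- The nearest neighbor complexity of `f`: the minimum size `|P ∪ N|` of a nearest
neighbor representation `(P, N)` of `f`. -/
def NN {n : ℕ} (f : (Fin n → Bool) → Bool) : ℕ :=
  sInf {m | ∃ P N, IsNNRep f P N ∧ (P ∪ N).card = m}

/-- A point of `ℝ^n` is Boolean if all of its coordinates are `0` or `1`. -/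
def IsBooleanPoint {n : ℕ} (p : EuclideanSpace ℝ (Fin n)) : Prop :=
  ∀ i, p i = 0 ∨ p i = 1

/-- The Boolean nearest neighbor complexity of `f`: the minimum size `|P ∪ N|` of a
nearest neighbor representation of `f` all of whose prototypes are Boolean points. -/
def BNN {n : ℕ} (f : (Fin n → Bool) → Bool) : ℕ :=
  sInf {m | ∃ P N, IsNNRep f P N ∧ (∀ p ∈ P ∪ N, IsBooleanPoint p) ∧ (P ∪ N).card = m}

/-- The weight (number of `1` components) of a Boolean vector. -/
def wt {n : ℕ} (x : Fin n → Bool) : ℕ := (Finset.univ.filter fun i => x i = true).card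

/-- The threshold function `TH_n^t`, with value `1` iff `x₁ + ⋯ + xₙ ≥ t`. -/
def TH (n t : ℕ) (x : Fin n → Bool) : Bool := decide (t ≤ wt x)


open Classical in
/-- Hamming distance between a Boolean vector and a point. -/
noncomputable def Hd {n : ℕ} (a : Fin n → Bool) (p : EuclideanSpace ℝ (Fin n)) : ℕ :=
  (Finset.univ.filter fun i => p i ≠ boolToR (a i)).card

lemma boolToR_inj {x y : Bool} (h : boolToR x = boolToR y) : x = y := by
  cases x <;> cases y <;> simp_all [boolToR]

lemma dist_sq_eq {n : ℕ} (a : Fin n → Bool) (p : EuclideanSpace ℝ (Fin n))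
    (hp : IsBooleanPoint p) : dist (toPoint a) p ^ 2 = (Hd a p : ℝ) := by
  classical
  rw [EuclideanSpace.dist_eq, Real.sq_sqrt (by positivity)]
  rw [Hd]
  rw [← Finset.sum_boole]
  apply Finset.sum_congr rfl
  intro i _
  rcases hp i with h | h <;> cases hai : a i <;>
    simp [toPoint, boolToR, h, hai] <;> norm_num

lemma dist_lt_iff {n : ℕ} (a : Fin n → Bool) (p q : EuclideanSpace ℝ (Fin n))
    (hp : IsBooleanPoint p) (hq : IsBooleanPoint q) :
    dist (toPoint a) p < dist (toPoint a) q ↔ Hd a p < Hd a q := by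
  rw [show (dist (toPoint a) p < dist (toPoint a) q ↔
      dist (toPoint a) p ^ 2 < dist (toPoint a) q ^ 2) from
    (pow_lt_pow_iff_left₀ dist_nonneg dist_nonneg two_ne_zero).symm,
    dist_sq_eq a p hp, dist_sq_eq a q hq, Nat.cast_lt]

lemma Hd_update_agree {n : ℕ} (a : Fin n → Bool) (i : Fin n) (v : Bool)
    (p : EuclideanSpace ℝ (Fin n)) (hv : a i ≠ v) (hpi : p i = boolToR (a i)) :
    Hd (Function.update a i v) p = Hd a p + 1 := by
  classical
  have hne : p i ≠ boolToR v := by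
    rw [hpi]; intro h; exact hv (boolToR_inj h)
  unfold Hd
  have : (Finset.univ.filter fun j => p j ≠ boolToR (Function.update a i v j)) =
      insert i (Finset.univ.filter fun j => p j ≠ boolToR (a j)) := by
    ext j
    by_cases hj : j = i
    · subst hj; simp [Function.update_self, hne]
    · simp [Function.update_of_ne hj, hj]
  rw [show (Finset.univ.filter fun j => p j ≠ boolToR ((Function.update a i v) j)) =
      (Finset.univ.filter fun j => p j ≠ boolToR (Function.update a i v j)) from rfl, this,
    Finset.card_insert_of_notMem (by simp [hpi])]

lemma Hd_update_disagree {n : ℕ} (a : Fin n → Bool) (i : Fin n) (v : Bool)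
    (p : EuclideanSpace ℝ (Fin n)) (hv : a i ≠ v) (hpi : p i = boolToR v) :
    Hd (Function.update a i v) p + 1 = Hd a p := by
  classical
  have hne : p i ≠ boolToR (a i) := by
    rw [hpi]; intro h; exact hv (boolToR_inj h.symm)
  unfold Hd
  have : (Finset.univ.filter fun j => p j ≠ boolToR (a j)) =
      insert i (Finset.univ.filter fun j => p j ≠ boolToR (Function.update a i v j)) := by
    ext j
    by_cases hj : j = i
    · subst hj
      simp only [Finset.mem_filter, Finset.mem_insert, Finset.mem_univ, true_and]
      exact ⟨fun _ => Or.inl trivial, fun _ => hne⟩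
    · simp [Function.update_of_ne hj, hj]
  rw [this, Finset.card_insert_of_notMem (by simp [Function.update_self, hpi])]

lemma wt_update_false {n : ℕ} (a : Fin n → Bool) (i : Fin n) (h : a i = true) :
    wt (Function.update a i false) + 1 = wt a := by
  unfold wt
  have : (Finset.univ.filter fun j => a j = true) =
      insert i (Finset.univ.filter fun j => Function.update a i false j = true) := by
    ext j
    by_cases hj : j = i
    · subst hj; simp [h]
    · simp [Function.update_of_ne hj, hj]
  rw [this, Finset.card_insert_of_notMem (by simp)]

lemma wt_update_true {n : ℕ} (a : Fin n → Bool) (i : Fin n) (h : a i = false) :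
    wt (Function.update a i true) = wt a + 1 := by
  unfold wt
  have : (Finset.univ.filter fun j => Function.update a i true j = true) =
      insert i (Finset.univ.filter fun j => a j = true) := by
    ext j
    by_cases hj : j = i
    · subst hj; simp [h]
    · simp [Function.update_of_ne hj, hj]
  rw [this, Finset.card_insert_of_notMem (by simp [h])]

/-- If the support of `c` (as a Boolean point) is inside the support of `a`,
then `Hd a c ≤ wt a`. -/
lemma Hd_le_wt {n : ℕ} (a : Fin n → Bool) (c : EuclideanSpace ℝ (Fin n))
    (hc : IsBooleanPoint c) (hsub : ∀ j, a j = false → c j = 0) :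
    Hd a c ≤ wt a := by
  classical
  apply Finset.card_le_card
  intro j hj
  simp only [Finset.mem_filter, Finset.mem_univ, true_and] at hj ⊢
  cases haj : a j
  · exfalso; exact hj (by rw [hsub j haj, boolToR]; simp [haj])
  · rfl

open Classical in
/-- The support of a point, as a finset. -/
noncomputable def suppR {n : ℕ} (p : EuclideanSpace ℝ (Fin n)) : Finset (Fin n) :=
  Finset.univ.filter fun i => p i = 1

lemma card_suppR {n : ℕ} (a : Fin n → Bool) (b : EuclideanSpace ℝ (Fin n))
    (hb : IsBooleanPoint b) (hsub : ∀ i, a i = true → b i = 1) :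
    (suppR b).card = wt a + Hd a b := by
  classical
  have hdisj : Disjoint (Finset.univ.filter fun i => a i = true)
      (Finset.univ.filter fun i => b i ≠ boolToR (a i)) := by
    rw [Finset.disjoint_left]
    intro i hA hD
    simp only [Finset.mem_filter, Finset.mem_univ, true_and] at hA hD
    exact hD (by rw [hsub i hA, hA, boolToR]; simp)
  have hunion : suppR b = (Finset.univ.filter fun i => a i = true) ∪
      (Finset.univ.filter fun i => b i ≠ boolToR (a i)) := by
    ext i
    simp only [suppR, Finset.mem_filter, Finset.mem_univ, true_and, Finset.mem_union]
    cases hai : a i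
    · have h0 : boolToR false = (0:ℝ) := by simp [boolToR]
      rcases hb i with h | h
      · simp [h, h0]
      · simp [h, h0]
    · have := hsub i hai
      simp [this, boolToR]
  rw [hunion, Finset.card_union_of_disjoint hdisj]
  rfl

section Main

variable {n t : ℕ} {P N : Finset (EuclideanSpace ℝ (Fin n))}

lemma lemA (hrep : IsNNRep (TH n t) P N) (hbool : ∀ p ∈ P ∪ N, IsBooleanPoint p)
    (ht : 1 ≤ t) {a : Fin n → Bool} (ha : wt a = t)
    {b : EuclideanSpace ℝ (Fin n)} (hbP : b ∈ P)
    (hb : ∀ c ∈ N, dist (toPoint a) b < dist (toPoint a) c) :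
    ∀ i, a i = true → b i = 1 := by
  intro i hi
  have hbBool : IsBooleanPoint b := hbool b (Finset.mem_union_left _ hbP)
  rcases hbBool i with hb0 | hb1
  swap
  · exact hb1
  exfalso
  set a' := Function.update a i false with ha'
  have hwt' : wt a' + 1 = wt a := wt_update_false a i hi
  have hTH' : TH n t a' = false := by
    simp only [TH, decide_eq_false_iff_not, not_le]; omega
  obtain ⟨c, hcN, hc⟩ := (hrep.2 a').2 hTH'
  have hcBool : IsBooleanPoint c := hbool c (Finset.mem_union_right _ hcN)
  have h1 : Hd a b < Hd a c := (dist_lt_iff a b c hbBool hcBool).1 (hb c hcN)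
  have h2 : Hd a' c < Hd a' b := (dist_lt_iff a' c b hcBool hbBool).1 (hc b hbP)
  have hane : a i ≠ false := by simp [hi]
  have hbflip : Hd a' b + 1 = Hd a b :=
    Hd_update_disagree a i false b hane (by rw [hb0]; simp [boolToR])
  rcases hcBool i with hc0 | hc1
  · have : Hd a' c + 1 = Hd a c :=
      Hd_update_disagree a i false c hane (by rw [hc0]; simp [boolToR])
    omega
  · have : Hd a' c = Hd a c + 1 :=
      Hd_update_agree a i false c hane (by rw [hc1, hi]; simp [boolToR])
    omega

lemma lemC (hrep : IsNNRep (TH n t) P N) (hbool : ∀ p ∈ P ∪ N, IsBooleanPoint p)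
    (ht : 1 ≤ t) {a : Fin n → Bool} (ha : wt a = t)
    {b : EuclideanSpace ℝ (Fin n)} (hbP : b ∈ P)
    (hb : ∀ c ∈ N, dist (toPoint a) b < dist (toPoint a) c) :
    (suppR b).card ≤ 2 * t := by
  classical
  have hbBool : IsBooleanPoint b := hbool b (Finset.mem_union_left _ hbP)
  have hA : ∀ i, a i = true → b i = 1 := lemA hrep hbool ht ha hbP hb
  -- pick a coordinate in the support of a
  obtain ⟨i, hi⟩ : ∃ i, a i = true := by
    have : (Finset.univ.filter fun j => a j = true).Nonempty := by
      rw [← Finset.card_pos]; unfold wt at ha; omega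
    obtain ⟨i, hi⟩ := this
    exact ⟨i, (Finset.mem_filter.1 hi).2⟩
  set a' := Function.update a i false with ha'
  have hwt' : wt a' + 1 = wt a := wt_update_false a i hi
  have hTH' : TH n t a' = false := by
    simp only [TH, decide_eq_false_iff_not, not_le]; omega
  obtain ⟨c, hcN, hc⟩ := (hrep.2 a').2 hTH'
  have hcBool : IsBooleanPoint c := hbool c (Finset.mem_union_right _ hcN)
  have h1 : Hd a b < Hd a c := (dist_lt_iff a b c hbBool hcBool).1 (hb c hcN)
  have h2 : Hd a' c < Hd a' b := (dist_lt_iff a' c b hcBool hbBool).1 (hc b hbP)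
  have hane : a i ≠ false := by simp [hi]
  have hbflip : Hd a' b = Hd a b + 1 :=
    Hd_update_agree a i false b hane (by rw [hA i hi, hi]; simp [boolToR])
  -- Lemma B : the support of c is contained in the support of a'
  have hsupc : ∀ j, a' j = false → c j = 0 := by
    intro j hj
    rcases hcBool j with h | h
    · exact h
    exfalso
    set a'' := Function.update a' j true with ha''
    have hwt'' : wt a'' = wt a' + 1 := wt_update_true a' j hj
    have hTH'' : TH n t a'' = true := by
      simp only [TH, decide_eq_true_eq]; omega
    obtain ⟨b'', hb''P, hb''⟩ := (hrep.2 a'').1 hTH''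
    have hb''Bool : IsBooleanPoint b'' := hbool b'' (Finset.mem_union_left _ hb''P)
    have h3 : Hd a'' b'' < Hd a'' c := (dist_lt_iff a'' b'' c hb''Bool hcBool).1 (hb'' c hcN)
    have h4 : Hd a' c < Hd a' b'' := (dist_lt_iff a' c b'' hcBool hb''Bool).1 (hc b'' hb''P)
    have hane' : a' j ≠ true := by simp [hj]
    have hcflip : Hd a'' c + 1 = Hd a' c :=
      Hd_update_disagree a' j true c hane' (by rw [h]; simp [boolToR])
    rcases hb''Bool j with h0 | h1'
    · have : Hd a'' b'' = Hd a' b'' + 1 :=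
        Hd_update_agree a' j true b'' hane' (by rw [h0, hj]; simp [boolToR])
      omega
    · have : Hd a'' b'' + 1 = Hd a' b'' :=
        Hd_update_disagree a' j true b'' hane' (by rw [h1']; simp [boolToR])
      omega
  have hHd'c : Hd a' c ≤ wt a' := Hd_le_wt a' c hcBool hsupc
  -- chain: Hd a b ≤ t - 1
  have hab : Hd a b + 1 ≤ t := by
    rcases hcBool i with hc0 | hc1
    · have : Hd a' c + 1 = Hd a c :=
        Hd_update_disagree a i false c hane (by rw [hc0]; simp [boolToR])
      omega
    · have : Hd a' c = Hd a c + 1 :=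
        Hd_update_agree a i false c hane (by rw [hc1, hi]; simp [boolToR])
      omega
  have := card_suppR a b hbBool hA
  omega

lemma main_count (hrep : IsNNRep (TH n t) P N) (hbool : ∀ p ∈ P ∪ N, IsBooleanPoint p)
    (ht : 1 ≤ t) (htn : t ≤ n) :
    n.choose t ≤ (2*t).choose t * P.card := by
  classical
  set S : Finset (Fin n → Bool) := Finset.univ.filter fun a => wt a = t with hS
  have hScard : S.card = n.choose t := by
    have hc0 : n.choose t = (Finset.powersetCard t (Finset.univ : Finset (Fin n))).card := by
      rw [Finset.card_powersetCard, Finset.card_univ, Fintype.card_fin]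
    rw [hc0]
    apply Finset.card_nbij' (fun a => Finset.univ.filter fun k => a k = true)
      (fun s => fun k => decide (k ∈ s))
    · intro a haS
      simp only [hS, Finset.mem_coe, Finset.mem_filter, Finset.mem_univ, true_and] at haS
      rw [Finset.mem_coe, Finset.mem_powersetCard]
      exact ⟨Finset.subset_univ _, haS⟩
    · intro s hs
      rw [Finset.mem_coe, Finset.mem_powersetCard] at hs
      simp only [hS, Finset.mem_coe, Finset.mem_filter, Finset.mem_univ, true_and]
      rw [← hs.2]; unfold wt; congr 1; ext k; simp
    · intro a _; funext k; simp
    · intro s _; ext k; simp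
  have hex : ∀ a : Fin n → Bool, wt a = t →
      ∃ b, b ∈ P ∧ ∀ c ∈ N, dist (toPoint a) b < dist (toPoint a) c := by
    intro a ha
    obtain ⟨b, hb, h⟩ := (hrep.2 a).1 (by simp [TH, ha])
    exact ⟨b, hb, h⟩
  set F : (Fin n → Bool) → EuclideanSpace ℝ (Fin n) := fun a =>
    if h : ∃ b, b ∈ P ∧ ∀ c ∈ N, dist (toPoint a) b < dist (toPoint a) c
    then h.choose else 0 with hF
  have hFmem : ∀ a ∈ S, F a ∈ P ∧ ∀ c ∈ N, dist (toPoint a) (F a) < dist (toPoint a) c := by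
    intro a haS
    simp only [hS, Finset.mem_filter, Finset.mem_univ, true_and] at haS
    have h := hex a haS
    simp only [hF, dif_pos h]
    exact h.choose_spec
  rw [← hScard]
  apply Finset.card_le_mul_card_image_of_maps_to (f := F) (fun a ha => (hFmem a ha).1)
  intro b hbP
  -- fiber bound
  by_cases hfib : (S.filter fun a => F a = b).Nonempty
  · obtain ⟨a0, ha0⟩ := hfib
    have ha0S := (Finset.mem_filter.1 ha0).1
    have ha0F := (Finset.mem_filter.1 ha0).2
    have ha0wt : wt a0 = t := by
      simpa only [hS, Finset.mem_filter, Finset.mem_univ, true_and] using ha0S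
    have hsb : (suppR b).card ≤ 2 * t := by
      have := hFmem a0 ha0S
      rw [ha0F] at this
      exact lemC hrep hbool ht ha0wt this.1 this.2
    calc (S.filter fun a => F a = b).card
        ≤ (Finset.powersetCard t (suppR b)).card := by
          apply Finset.card_le_card_of_injOn (fun a => Finset.univ.filter fun k => a k = true)
          · intro a haf
            obtain ⟨haS, haF⟩ := Finset.mem_filter.1 haf
            have hawt : wt a = t := by
              simpa only [hS, Finset.mem_filter, Finset.mem_univ, true_and] using haS
            have hw := hFmem a haS
            rw [haF] at hw
            have hsub := lemA hrep hbool ht hawt hw.1 hw.2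
            rw [Finset.mem_coe, Finset.mem_powersetCard]
            constructor
            · intro k hk
              simp only [Finset.mem_filter, Finset.mem_univ, true_and] at hk
              simp only [suppR, Finset.mem_filter, Finset.mem_univ, true_and]
              exact hsub k hk
            · exact hawt
          · intro a1 h1 a2 h2 heq
            funext k
            have heq' : (Finset.univ.filter fun j => a1 j = true) =
                (Finset.univ.filter fun j => a2 j = true) := heq
            have : (k ∈ Finset.univ.filter fun j => a1 j = true) ↔
                (k ∈ Finset.univ.filter fun j => a2 j = true) := by rw [heq']
            simp only [Finset.mem_filter, Finset.mem_univ, true_and] at this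
            cases h1k : a1 k <;> cases h2k : a2 k <;> simp_all
      _ = (suppR b).card.choose t := Finset.card_powersetCard t _
      _ ≤ (2*t).choose t := Nat.choose_le_choose t hsb
  · rw [Finset.not_nonempty_iff_eq_empty] at hfib
    rw [hfib]; simp

end Main

lemma toPoint_inj {n : ℕ} : Function.Injective (toPoint (n := n)) := by
  intro a b h
  funext i
  exact boolToR_inj (congrArg (fun p : EuclideanSpace ℝ (Fin n) => p i) h)

lemma toPoint_bool {n : ℕ} (a : Fin n → Bool) : IsBooleanPoint (toPoint a) := by
  intro i; cases a i <;> simp [toPoint, boolToR]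

lemma rep_exists (n t : ℕ) : ∃ P N : Finset (EuclideanSpace ℝ (Fin n)),
    IsNNRep (TH n t) P N ∧ (∀ p ∈ P ∪ N, IsBooleanPoint p) := by
  classical
  refine ⟨(Finset.univ.filter fun a => TH n t a = true).image toPoint,
    (Finset.univ.filter fun a => TH n t a = false).image toPoint, ⟨?_, ?_⟩, ?_⟩
  · rw [Finset.disjoint_left]
    intro x hx hx'
    obtain ⟨a, ha, rfl⟩ := Finset.mem_image.1 hx
    obtain ⟨b, hb, hba⟩ := Finset.mem_image.1 hx'
    simp only [Finset.mem_filter, Finset.mem_univ, true_and] at ha hb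
    have := toPoint_inj hba
    rw [this] at hb
    rw [ha] at hb
    simp at hb
  · intro a
    constructor
    · intro hTHa
      refine ⟨toPoint a, Finset.mem_image_of_mem _ (by simp [hTHa]), ?_⟩
      intro c hc
      obtain ⟨b, hb, rfl⟩ := Finset.mem_image.1 hc
      simp only [Finset.mem_filter, Finset.mem_univ, true_and] at hb
      rw [dist_self]
      apply dist_pos.2
      intro hne
      have := toPoint_inj hne
      rw [← this] at hb
      rw [hTHa] at hb
      simp at hb
    · intro hTHa
      refine ⟨toPoint a, Finset.mem_image_of_mem _ (by simp [hTHa]), ?_⟩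
      intro c hc
      obtain ⟨b, hb, rfl⟩ := Finset.mem_image.1 hc
      simp only [Finset.mem_filter, Finset.mem_univ, true_and] at hb
      rw [dist_self]
      apply dist_pos.2
      intro hne
      have := toPoint_inj hne
      rw [← this] at hb
      rw [hTHa] at hb
      simp at hb
  · intro p hp
    rcases Finset.mem_union.1 hp with h | h <;>
    · obtain ⟨a, _, rfl⟩ := Finset.mem_image.1 h
      exact toPoint_bool a


lemma fact_ineq : ∀ t : ℕ, 3^t * ((2*t).factorial)^2 ≤ 2^t * (3*t).factorial * t.factorial := by
  intro t
  induction t with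
  | zero => simp
  | succ t ih =>
    have e1 : (2*(t+1)).factorial = ((2*t+2) * (2*t+1)) * (2*t).factorial := by
      rw [show 2*(t+1) = (2*t+1)+1 by ring, Nat.factorial_succ, Nat.factorial_succ]; ring
    have e2 : (3*(t+1)).factorial = ((3*t+3) * (3*t+2) * (3*t+1)) * (3*t).factorial := by
      rw [show 3*(t+1) = ((3*t+1)+1)+1 by ring, Nat.factorial_succ, Nat.factorial_succ,
        Nat.factorial_succ]; ring
    have e3 : (t+1).factorial = (t+1) * t.factorial := Nat.factorial_succ t
    rw [e1, e2, e3]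
    have key : 3 * ((2*t+2) * (2*t+1))^2 ≤ 2 * ((3*t+3) * (3*t+2) * (3*t+1) * (t+1)) := by
      nlinarith [sq_nonneg t]
    calc 3^(t+1) * (((2*t+2) * (2*t+1)) * (2*t).factorial)^2
        = (3 * ((2*t+2) * (2*t+1))^2) * (3^t * ((2*t).factorial)^2) := by ring
      _ ≤ (2 * ((3*t+3) * (3*t+2) * (3*t+1) * (t+1))) * (2^t * (3*t).factorial * t.factorial) :=
          Nat.mul_le_mul key ih
      _ = 2^(t+1) * ((3*t+3) * (3*t+2) * (3*t+1) * (3*t).factorial) * ((t+1) * t.factorial) := by ring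

lemma choose_ratio (t : ℕ) : 3^t * ((2*t).choose t) ≤ 2^t * ((3*t).choose t) := by
  have h1 : (2*t).choose t * t.factorial * t.factorial = (2*t).factorial := by
    have := Nat.choose_mul_factorial_mul_factorial (show t ≤ 2*t by omega)
    simpa [show 2*t - t = t by omega] using this
  have h2 : (3*t).choose t * t.factorial * (2*t).factorial = (3*t).factorial := by
    have := Nat.choose_mul_factorial_mul_factorial (show t ≤ 3*t by omega)
    simpa [show 3*t - t = 2*t by omega] using this
  have hpos : 0 < t.factorial * t.factorial * (2*t).factorial :=
    Nat.mul_pos (Nat.mul_pos t.factorial_pos t.factorial_pos) (2*t).factorial_pos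
  refine Nat.le_of_mul_le_mul_right ?_ hpos
  calc 3^t * ((2*t).choose t) * (t.factorial * t.factorial * (2*t).factorial)
      = 3^t * (((2*t).choose t * t.factorial * t.factorial) * (2*t).factorial) := by ring
    _ = 3^t * ((2*t).factorial)^2 := by rw [h1]; ring
    _ ≤ 2^t * (3*t).factorial * t.factorial := fact_ineq t
    _ = 2^t * ((3*t).choose t * t.factorial * (2*t).factorial) * t.factorial := by rw [h2]
    _ = 2^t * ((3*t).choose t) * (t.factorial * t.factorial * (2*t).factorial) := by ring

lemma part3 : (∃ c : ℝ, 0 < c ∧ ∀ᶠ m : ℕ in Filter.atTop,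
      (2 : ℝ) ^ (c * m) ≤ (m.choose (m / 3) : ℝ) / ((2 * (m / 3)).choose (m / 3) : ℝ)) := by
  refine ⟨1/12, by norm_num, ?_⟩
  filter_upwards [Filter.eventually_ge_atTop 4] with m hm
  set t := m / 3 with ht
  have h3t : 3 * t ≤ m := Nat.mul_div_le m 3 |>.trans_eq rfl |> fun h => by omega
  have hC2pos : (0:ℝ) < ((2*t).choose t : ℝ) := by
    exact_mod_cast Nat.choose_pos (by omega)
  have hnat : 3^t * ((2*t).choose t) ≤ 2^t * (m.choose t) :=
    (choose_ratio t).trans (Nat.mul_le_mul_left _ (Nat.choose_le_choose t h3t))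
  have hreal : (3/2:ℝ)^t ≤ (m.choose t : ℝ) / ((2*t).choose t : ℝ) := by
    rw [le_div_iff₀ hC2pos, div_pow, div_mul_eq_mul_div, div_le_iff₀ (by positivity)]
    calc (3:ℝ)^t * ((2*t).choose t : ℝ) = ((3^t * ((2*t).choose t) : ℕ) : ℝ) := by push_cast; ring
      _ ≤ ((2^t * (m.choose t) : ℕ) : ℝ) := by exact_mod_cast hnat
      _ = (m.choose t : ℝ) * 2^t := by push_cast; ring
  refine le_trans ?_ hreal
  have h1 : (2:ℝ) ^ ((1/12:ℝ) * m) ≤ (2:ℝ) ^ ((t:ℝ)/2) := by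
    apply Real.rpow_le_rpow_of_exponent_le one_le_two
    have : (m:ℝ) ≤ 6 * t := by
      have : m ≤ 6 * t := by omega
      exact_mod_cast this
    linarith
  refine h1.trans ?_
  have hsq : ((2:ℝ) ^ ((t:ℝ)/2))^2 ≤ ((3/2:ℝ)^t)^2 := by
    have : ((2:ℝ) ^ ((t:ℝ)/2))^2 = (2:ℝ)^(t:ℕ) := by
      rw [← Real.rpow_natCast ((2:ℝ) ^ ((t:ℝ)/2)) 2, ← Real.rpow_mul (by norm_num),
        show ((t:ℝ)/2) * ((2:ℕ):ℝ) = ((t:ℕ):ℝ) by push_cast; ring, Real.rpow_natCast]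
    rw [this]
    calc (2:ℝ)^t ≤ ((9/4:ℝ))^t := pow_le_pow_left₀ (by norm_num) (by norm_num) t
      _ = ((3/2:ℝ)^2)^t := by norm_num
      _ = ((3/2:ℝ)^t)^2 := by rw [← pow_mul, mul_comm, pow_mul]
  have h2pos : (0:ℝ) ≤ (2:ℝ) ^ ((t:ℝ)/2) := (Real.rpow_pos_of_pos two_pos _).le
  nlinarith [hsq, h2pos, pow_nonneg (show (0:ℝ) ≤ 3/2 by norm_num) t]

/-- With `t = ⌊n/3⌋`, every Boolean nearest neighbor representation of
`TH_n^t` contains at least `C(n,t) / C(2t,t)` positive prototypes; in particular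
`BNN(TH_n^t) ≥ C(n,t) / C(2t,t)`, and this bound is `2^{Ω(n)}`. -/
theorem BNN_threshold_third (n : ℕ) :
    (∀ P N : Finset (EuclideanSpace ℝ (Fin n)),
      IsNNRep (TH n (n / 3)) P N → (∀ p ∈ P ∪ N, IsBooleanPoint p) →
      ((n.choose (n / 3) : ℝ) / ((2 * (n / 3)).choose (n / 3) : ℝ) ≤ (P.card : ℝ))) ∧
    ((n.choose (n / 3) : ℝ) / ((2 * (n / 3)).choose (n / 3) : ℝ) ≤ (BNN (TH n (n / 3)) : ℝ)) ∧
    (∃ c : ℝ, 0 < c ∧ ∀ᶠ m : ℕ in Filter.atTop,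
      (2 : ℝ) ^ (c * m) ≤ (m.choose (m / 3) : ℝ) / ((2 * (m / 3)).choose (m / 3) : ℝ)) := by

  have part1 : ∀ P N : Finset (EuclideanSpace ℝ (Fin n)),
      IsNNRep (TH n (n / 3)) P N → (∀ p ∈ P ∪ N, IsBooleanPoint p) →
      ((n.choose (n / 3) : ℝ) / ((2 * (n / 3)).choose (n / 3) : ℝ) ≤ (P.card : ℝ)) := by
    intro P N hrep hbool
    set t := n / 3 with ht
    have hC2pos : (0:ℝ) < ((2*t).choose t : ℝ) := by
      exact_mod_cast Nat.choose_pos (by omega)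
    rw [div_le_iff₀ hC2pos]
    by_cases h1t : 1 ≤ t
    · have hmc := main_count hrep hbool h1t (by omega)
      calc (n.choose t : ℝ) ≤ (((2*t).choose t * P.card : ℕ) : ℝ) := by exact_mod_cast hmc
        _ = (P.card : ℝ) * ((2*t).choose t : ℝ) := by push_cast; ring
    · have ht0 : t = 0 := by omega
      obtain ⟨b, hbP, -⟩ := (hrep.2 (fun _ => false)).1 (by simp [TH, ht0])
      have hP1 : 1 ≤ P.card := Finset.card_pos.2 ⟨b, hbP⟩
      rw [ht0]
      simp only [Nat.choose_zero_right, mul_zero, Nat.cast_one]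
      calc (1:ℝ) ≤ (P.card : ℝ) := by exact_mod_cast hP1
        _ = (P.card : ℝ) * 1 := by ring
  refine ⟨part1, ?_, part3⟩
  have hne : {m | ∃ P N, IsNNRep (TH n (n/3)) P N ∧
      (∀ p ∈ P ∪ N, IsBooleanPoint p) ∧ (P ∪ N).card = m}.Nonempty := by
    obtain ⟨P, N, h1, h2⟩ := rep_exists n (n/3)
    exact ⟨(P ∪ N).card, P, N, h1, h2, rfl⟩
  obtain ⟨P, N, hrep, hbool, hcard⟩ := Nat.sInf_mem hne
  have h1 := part1 P N hrep hbool
  refine h1.trans ?_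
  rw [BNN]
  rw [← hcard]
  exact_mod_cast Finset.card_le_card Finset.subset_union_left
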